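/- Let V ⊆ ℝ^d be a Borel-measurable cone (closed under multiplication by positive scalars) and let w ∈ ℝ^d. Then γ(V + w) ≥ γ(V) · exp(−½‖w‖² − ‖w‖·√d) and γ(V + w) ≤ γ(V) · exp(‖w‖·√d). -/

import Mathlib

open MeasureTheory Set Metric Pointwise

noncomputable section

namespace Stmt5Aux

variable {d : ℕ}

local notation "E" => EuclideanSpace ℝ (Fin d)

lemma cone_smul_eq (V : Set E) (hVcone : ∀ c : ℝ, 0 < c → ∀ x ∈ V, c • x ∈ V)
    {c : ℝ} (hc : 0 < c) : c • V = V := by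
  apply Subset.antisymm
  · rintro _ ⟨x, hx, rfl⟩
    exact hVcone c hc x hx
  · intro x hx
    refine ⟨c⁻¹ • x, hVcone c⁻¹ (by positivity) x hx, ?_⟩
    simp [smul_smul, mul_inv_cancel₀ hc.ne']

lemma cone_cB (hd : 0 < d) (V : Set E) (hVcone : ∀ c : ℝ, 0 < c → ∀ x ∈ V, c • x ∈ V)
    {r : ℝ} (hr : 0 ≤ r) :
    volume (V ∩ closedBall 0 r) = (ENNReal.ofReal r) ^ d * volume (V ∩ closedBall 0 1) := by
  rcases hr.eq_or_lt with h | h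
  · subst h
    simp only [ENNReal.ofReal_zero, zero_pow hd.ne', zero_mul]
    refine le_antisymm ?_ zero_le
    calc volume (V ∩ closedBall (0 : E) 0) ≤ volume (closedBall (0 : E) 0) :=
          measure_mono inter_subset_right
      _ = 0 := by
          rw [Measure.addHaar_closedBall' _ _ le_rfl]
          simp [zero_pow hd.ne', finrank_euclideanSpace_fin]
  · have h1 : V ∩ closedBall 0 r = r • (V ∩ closedBall 0 1) := by
      rw [smul_set_inter₀ h.ne', cone_smul_eq V hVcone h, smul_closedBall' h.ne',
        smul_zero, Real.norm_eq_abs, abs_of_pos h, mul_one]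
    rw [h1, Measure.addHaar_smul_of_nonneg _ hr, finrank_euclideanSpace_fin,
      ENNReal.ofReal_pow hr]

lemma cone_ioc (hd : 0 < d) (V : Set E) (hVmeas : MeasurableSet V)
    (hVcone : ∀ c : ℝ, 0 < c → ∀ x ∈ V, c • x ∈ V) {a b : ℝ} (hab : a < b) :
    volume (V ∩ (fun x : E => ‖x‖) ⁻¹' (Ioc a b)) =
      ((ENNReal.ofReal b) ^ d - (ENNReal.ofReal a) ^ d) * volume (V ∩ closedBall 0 1) := by
  rcases le_or_gt b 0 with hb | hb
  · have hpre : (fun x : E => ‖x‖) ⁻¹' (Ioc a b) ⊆ closedBall 0 0 := by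
      intro x hx
      simp only [mem_preimage, mem_Ioc] at hx
      simp only [mem_closedBall, dist_zero_right]
      linarith [hx.2]
    have h0 : volume (V ∩ (fun x : E => ‖x‖) ⁻¹' (Ioc a b)) = 0 := by
      refine le_antisymm ?_ zero_le
      calc volume (V ∩ (fun x : E => ‖x‖) ⁻¹' (Ioc a b)) ≤ volume (closedBall (0 : E) 0) :=
            measure_mono (inter_subset_right.trans hpre)
        _ = 0 := by
            rw [Measure.addHaar_closedBall' _ _ le_rfl]
            simp [zero_pow hd.ne', finrank_euclideanSpace_fin]
    rw [h0, ENNReal.ofReal_eq_zero.2 hb, ENNReal.ofReal_eq_zero.2 (by linarith : a ≤ 0),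
      zero_pow hd.ne', tsub_zero, zero_mul]
  · rcases lt_or_ge a 0 with ha | ha
    · have hpre : (fun x : E => ‖x‖) ⁻¹' (Ioc a b) = closedBall 0 b := by
        ext x
        simp only [mem_preimage, mem_Ioc, mem_closedBall, dist_zero_right]
        exact ⟨fun h => h.2, fun h => ⟨lt_of_lt_of_le ha (norm_nonneg x), h⟩⟩
      rw [hpre, cone_cB hd V hVcone hb.le, ENNReal.ofReal_eq_zero.2 ha.le,
        zero_pow hd.ne', tsub_zero]
    · have hpre : (fun x : E => ‖x‖) ⁻¹' (Ioc a b) = closedBall 0 b \ closedBall 0 a := by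
        ext x
        simp only [mem_preimage, mem_Ioc, mem_diff, mem_closedBall, dist_zero_right, not_le]
        tauto
      have hsub : V ∩ closedBall 0 a ⊆ V ∩ closedBall 0 b :=
        inter_subset_inter_right V (closedBall_subset_closedBall hab.le)
      have hmeasa : NullMeasurableSet (V ∩ closedBall (0 : E) a) volume :=
        (hVmeas.inter measurableSet_closedBall).nullMeasurableSet
      have hfin : volume (V ∩ closedBall (0 : E) a) ≠ ⊤ :=
        ((measure_mono inter_subset_right).trans_lt measure_closedBall_lt_top).ne
      have : V ∩ (closedBall 0 b \ closedBall 0 a)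
          = (V ∩ closedBall 0 b) \ (V ∩ closedBall 0 a) := by
        ext x; simp only [mem_inter_iff, mem_diff]; tauto
      rw [hpre, this, measure_diff hsub hmeasa hfin, cone_cB hd V hVcone hb.le,
        cone_cB hd V hVcone ha, ENNReal.sub_mul]
      intro _ _
      exact ((measure_mono inter_subset_right).trans_lt measure_closedBall_lt_top).ne

lemma cone_map_measure (hd : 0 < d) (V : Set E) (hVmeas : MeasurableSet V)
    (hVcone : ∀ c : ℝ, 0 < c → ∀ x ∈ V, c • x ∈ V) :
    volume (closedBall (0 : E) 1) • Measure.map (fun x : E => ‖x‖) (volume.restrict V)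
      = volume (V ∩ closedBall 0 1) • Measure.map (fun x : E => ‖x‖) (volume : Measure E) := by
  have huniv : ∀ c : ℝ, 0 < c → ∀ x ∈ (univ : Set E), c • x ∈ (univ : Set E) := by
    intro c hc x _; trivial
  refine MeasureTheory.Measure.ext_of_generateFrom_of_iUnion
    { S : Set ℝ | ∃ l u, l < u ∧ Ioc l u = S }
    (fun n : ℕ => Ioc (-(n + 1 : ℝ)) (n + 1))
    (BorelSpace.measurable_eq.trans (borel_eq_generateFrom_Ioc ℝ)) (isPiSystem_Ioc id id)
    ?_ ?_ ?_ ?_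
  · ext x
    simp only [mem_iUnion, mem_Ioc, mem_univ, iff_true]
    obtain ⟨n, hn⟩ := exists_nat_ge |x|
    have := abs_le.1 hn
    exact ⟨n, by constructor <;> linarith [this.1, this.2]⟩
  · intro n
    refine ⟨-(n + 1 : ℝ), (n + 1 : ℝ), ?_, rfl⟩
    have : (0 : ℝ) < n + 1 := by positivity
    linarith
  · intro n
    rw [Measure.smul_apply, smul_eq_mul,
      Measure.map_apply measurable_norm measurableSet_Ioc,
      Measure.restrict_apply (measurable_norm measurableSet_Ioc)]
    refine ENNReal.mul_ne_top measure_closedBall_lt_top.ne ?_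
    have : (fun x : E => ‖x‖) ⁻¹' Ioc (-(n + 1 : ℝ)) (n + 1) ∩ V ⊆
        closedBall (0 : E) (n + 1) := by
      intro x hx
      simp only [mem_inter_iff, mem_preimage, mem_Ioc] at hx
      simpa [mem_closedBall, dist_zero_right] using hx.1.2
    exact ((measure_mono this).trans_lt measure_closedBall_lt_top).ne
  · rintro _ ⟨a, b, hab, rfl⟩
    rw [Measure.smul_apply, Measure.smul_apply, smul_eq_mul, smul_eq_mul,
      Measure.map_apply measurable_norm measurableSet_Ioc,
      Measure.map_apply measurable_norm measurableSet_Ioc,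
      Measure.restrict_apply (measurable_norm measurableSet_Ioc)]
    have h1 : (fun x : E => ‖x‖) ⁻¹' Ioc a b ∩ V = V ∩ (fun x : E => ‖x‖) ⁻¹' (Ioc a b) :=
      inter_comm _ _
    have hu := cone_ioc hd univ MeasurableSet.univ huniv hab
    rw [univ_inter, univ_inter] at hu
    rw [h1, cone_ioc hd V hVmeas hVcone hab, hu]
    ring

lemma cone_key (hd : 0 < d) (V : Set E) (hVmeas : MeasurableSet V)
    (hVcone : ∀ c : ℝ, 0 < c → ∀ x ∈ V, c • x ∈ V) (f : ℝ → ENNReal) (hf : Measurable f) :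
    volume (closedBall (0 : E) 1) * ∫⁻ x in V, f ‖x‖
      = volume (V ∩ closedBall 0 1) * ∫⁻ x : E, f ‖x‖ := by
  have h1 : ∫⁻ x in V, f ‖x‖ = ∫⁻ r, f r ∂(Measure.map (fun x : E => ‖x‖) (volume.restrict V)) :=
    (lintegral_map hf measurable_norm).symm
  have h2 : ∫⁻ x : E, f ‖x‖ = ∫⁻ r, f r ∂(Measure.map (fun x : E => ‖x‖) (volume : Measure E)) :=
    (lintegral_map hf measurable_norm).symm
  rw [h1, h2, ← smul_eq_mul, ← smul_eq_mul, ← lintegral_smul_measure, ← lintegral_smul_measure,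
    cone_map_measure hd V hVmeas hVcone]

lemma gauss_lintegral {b : ℝ} (hb : 0 < b) :
    ∫⁻ x : E, ENNReal.ofReal (Real.exp (-b * ‖x‖ ^ 2))
      = ENNReal.ofReal ((Real.pi / b) ^ ((d : ℝ) / 2)) := by
  have hint : Integrable (fun x : E => Real.exp (-b * ‖x‖ ^ 2)) := by
    have h := (GaussianFourier.integrable_cexp_neg_mul_sq_norm_add
      (V := E) (b := (b : ℂ)) (by simpa using hb) 0 0).norm
    refine h.congr (Filter.Eventually.of_forall fun x => ?_)
    simp only [zero_mul, add_zero, Complex.norm_exp,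
      ← Complex.ofReal_pow, ← Complex.ofReal_neg, ← Complex.ofReal_mul, Complex.ofReal_re]
  rw [← MeasureTheory.ofReal_integral_eq_lintegral_ofReal hint
    (Filter.Eventually.of_forall fun x => (Real.exp_nonneg _))]
  congr 1
  have := GaussianFourier.integral_rexp_neg_mul_sq_norm (V := E) hb
  rwa [finrank_euclideanSpace_fin] at this

end Stmt5Aux

/-- Standard Gaussian measure of a set in `ℝ^d`. -/
def gauss {d : ℕ} (B : Set (EuclideanSpace ℝ (Fin d))) : ℝ :=
  ∫ x in B, (2 * Real.pi) ^ (-(d : ℝ) / 2) * Real.exp (-‖x‖ ^ 2 / 2)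

/-- Simpler two-sided bounds for the Gaussian measure of a shifted cone. -/
theorem stmt5 {d : ℕ} (V : Set (EuclideanSpace ℝ (Fin d))) (hVmeas : MeasurableSet V)
    (hVcone : ∀ c : ℝ, 0 < c → ∀ x ∈ V, c • x ∈ V)
    (w : EuclideanSpace ℝ (Fin d)) :
    gauss V * Real.exp (-‖w‖ ^ 2 / 2 - ‖w‖ * Real.sqrt d) ≤ gauss ((· + w) '' V) ∧
    gauss ((· + w) '' V) ≤ gauss V * Real.exp (‖w‖ * Real.sqrt d) := by
  by_cases hw0 : w = 0
  · subst hw0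
    have himg : (· + (0 : EuclideanSpace ℝ (Fin d))) '' V = V := by simp
    rw [himg]
    simp
  rcases Nat.eq_zero_or_pos d with hd | hd
  · exfalso
    subst hd
    exact hw0 (Subsingleton.elim _ _)
  set t := ‖w‖ with htdef
  set s := Real.sqrt d with hsdef
  have htpos : 0 < t := norm_pos_iff.2 hw0
  have hspos : 0 < s := Real.sqrt_pos.2 (by exact_mod_cast hd)
  have hd2 : (d : ℝ) = s ^ 2 := (Real.sq_sqrt (by positivity)).symm
  have hts : 0 < t + s := by linarith
  set c : ℝ := (2 * Real.pi) ^ (-(d : ℝ) / 2) with hcdef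
  have hcpos : 0 < c := Real.rpow_pos_of_pos (by positivity) _
  set β : ℝ := s / (t + s) with hβdef
  set γ : ℝ := (t + s) / s with hγdef
  have hβpos : 0 < β := by positivity
  have hγpos : 0 < γ := by positivity
  -- measure-theoretic setup
  set P : ENNReal := volume (closedBall (0 : EuclideanSpace ℝ (Fin d)) 1) with hPdef
  set k : ENNReal := volume (V ∩ closedBall (0 : EuclideanSpace ℝ (Fin d)) 1) with hkdef
  have hP0 : P ≠ 0 :=
    (measure_closedBall_pos volume (0 : EuclideanSpace ℝ (Fin d)) one_pos).ne'
  have hPtop : P ≠ ⊤ :=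
    (measure_closedBall_lt_top (x := (0 : EuclideanSpace ℝ (Fin d))) (r := 1)).ne
  -- lintegral notation
  set L0 : ENNReal := ∫⁻ x in V, ENNReal.ofReal (c * Real.exp (-‖x‖ ^ 2 / 2)) with hL0def
  set A : ENNReal := ∫⁻ x in V, ENNReal.ofReal (c * Real.exp (-‖x + w‖ ^ 2 / 2)) with hAdef
  have hcont0 : Continuous fun x : EuclideanSpace ℝ (Fin d) =>
      c * Real.exp (-‖x‖ ^ 2 / 2) := by fun_prop
  have hgV : gauss V = L0.toReal := by
    rw [hL0def]
    simp only [gauss]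
    rw [integral_eq_lintegral_of_nonneg_ae
      (Filter.Eventually.of_forall fun x => by positivity) hcont0.aestronglyMeasurable]
  -- translation
  have hemb : MeasurableEmbedding (· + w : EuclideanSpace ℝ (Fin d) → EuclideanSpace ℝ (Fin d)) :=
    (Homeomorph.addRight w).measurableEmbedding
  have hMP : MeasurePreserving (· + w : EuclideanSpace ℝ (Fin d) → EuclideanSpace ℝ (Fin d))
      volume volume :=
    measurePreserving_add_right volume w
  have himg : MeasurableSet ((· + w) '' V) := hemb.measurableSet_image' hVmeas
  have hgVw : gauss ((· + w) '' V) = A.toReal := by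
    simp only [gauss]
    rw [integral_eq_lintegral_of_nonneg_ae
      (Filter.Eventually.of_forall fun x => by positivity) hcont0.aestronglyMeasurable, hAdef]
    congr 1
    have hres : volume.restrict ((· + w) '' V)
        = Measure.map (· + w) (volume.restrict V) := by
      conv_lhs => rw [← hMP.map_eq]
      rw [Measure.restrict_map hMP.measurable himg, hemb.injective.preimage_image]
    rw [hres, lintegral_map (by fun_prop) hMP.measurable]
  have hkey : ∀ f : ℝ → ENNReal, Measurable f →
      P * ∫⁻ x in V, f ‖x‖ = k * ∫⁻ x : EuclideanSpace ℝ (Fin d), f ‖x‖ :=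
    fun f hf => Stmt5Aux.cone_key hd V hVmeas hVcone f hf
  have hIfull : ∀ C b : ℝ, 0 ≤ C → 0 < b →
      (∫⁻ x : EuclideanSpace ℝ (Fin d), ENNReal.ofReal (C * Real.exp (-b * ‖x‖ ^ 2)))
        = ENNReal.ofReal (C * (Real.pi / b) ^ ((d : ℝ) / 2)) := by
    intro C b hC hb
    simp_rw [ENNReal.ofReal_mul hC]
    rw [lintegral_const_mul _ (by fun_prop), Stmt5Aux.gauss_lintegral hb,
      ← ENNReal.ofReal_mul hC]
  have hone : c * (2 * Real.pi) ^ ((d : ℝ) / 2) = 1 := by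
    rw [hcdef, ← Real.rpow_add (by positivity), show -(d:ℝ)/2 + (d:ℝ)/2 = 0 by ring, Real.rpow_zero]
  have hfull : (∫⁻ x : EuclideanSpace ℝ (Fin d),
      ENNReal.ofReal (c * Real.exp (-‖x‖ ^ 2 / 2))) = 1 := by
    have h2 : ∀ x : EuclideanSpace ℝ (Fin d), ENNReal.ofReal (c * Real.exp (-‖x‖ ^ 2 / 2))
        = ENNReal.ofReal (c * Real.exp (-(1/2 : ℝ) * ‖x‖ ^ 2)) := fun x => by
      rw [show -‖x‖ ^ 2 / 2 = -(1/2 : ℝ) * ‖x‖ ^ 2 by ring]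
    simp_rw [h2]
    rw [hIfull c (1/2) hcpos.le (by norm_num),
      show Real.pi / (1/2 : ℝ) = 2 * Real.pi by ring, hone]
    exact ENNReal.ofReal_one
  have hPL0 : P * L0 = k := by
    rw [hL0def, hkey (fun r => ENNReal.ofReal (c * Real.exp (-r ^ 2 / 2))) (by fun_prop),
      hfull, mul_one]
  have hL0le : L0 ≤ 1 := by
    rw [hL0def, ← hfull]
    exact setLIntegral_le_lintegral _ _
  -- pointwise bounds
  have hnorm : ∀ x : EuclideanSpace ℝ (Fin d),
      ‖x + w‖ ^ 2 = ‖x‖ ^ 2 + 2 * (inner ℝ x w : ℝ) + t ^ 2 := fun x => by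
    rw [htdef]; exact norm_add_sq_real x w
  have hip : ∀ x : EuclideanSpace ℝ (Fin d), |(inner ℝ x w : ℝ)| ≤ ‖x‖ * t := fun x => by
    rw [htdef]; exact abs_real_inner_le_norm x w
  have hup : ∀ x : EuclideanSpace ℝ (Fin d), c * Real.exp (-‖x + w‖ ^ 2 / 2)
      ≤ (c * Real.exp (t * s / 2)) * Real.exp (-(β / 2) * ‖x‖ ^ 2) := by
    intro x
    rw [mul_assoc, ← Real.exp_add]
    refine mul_le_mul_of_nonneg_left (Real.exp_le_exp.2 ?_) hcpos.le
    have h1 := (abs_le.1 (hip x)).1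
    have key : 0 ≤ (1 - β) * ‖x‖ ^ 2 - 2 * t * ‖x‖ + t ^ 2 + t * s := by
      have e1 : 1 - β = t / (t + s) := by rw [hβdef]; field_simp; ring
      have e2 : t / (t + s) * (‖x‖ - (t + s)) ^ 2
          = t / (t + s) * ‖x‖ ^ 2 - 2 * t * ‖x‖ + t ^ 2 + t * s := by
        field_simp
        ring
      have e3 : 0 ≤ t / (t + s) * (‖x‖ - (t + s)) ^ 2 := by positivity
      rw [e1]
      linarith [e2, e3]
    rw [hnorm x]
    linarith [key, h1]
  have hlow : ∀ x : EuclideanSpace ℝ (Fin d),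
      (c * Real.exp (-t ^ 2 / 2 - t * s / 2)) * Real.exp (-(γ / 2) * ‖x‖ ^ 2)
      ≤ c * Real.exp (-‖x + w‖ ^ 2 / 2) := by
    intro x
    rw [mul_assoc, ← Real.exp_add]
    refine mul_le_mul_of_nonneg_left (Real.exp_le_exp.2 ?_) hcpos.le
    have h1 := (abs_le.1 (hip x)).2
    have key : 0 ≤ (γ - 1) * ‖x‖ ^ 2 - 2 * t * ‖x‖ + t * s := by
      have e1 : γ - 1 = t / s := by rw [hγdef]; field_simp; ring
      have e2 : t / s * (‖x‖ - s) ^ 2 = t / s * ‖x‖ ^ 2 - 2 * t * ‖x‖ + t * s := by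
        field_simp
        ring
      have e3 : 0 ≤ t / s * (‖x‖ - s) ^ 2 := by positivity
      rw [e1]
      linarith [e2, e3]
    rw [hnorm x]
    linarith [key, h1]
  -- constant bounds
  have hlogγ : Real.log γ ≤ t / s := by
    have h := Real.log_le_sub_one_of_pos hγpos
    have e : γ - 1 = t / s := by rw [hγdef]; field_simp; ring
    linarith
  have hdγ : (d : ℝ) / 2 * (t / s) = t * s / 2 := by
    rw [hd2]; field_simp
  have hdlog : (d : ℝ) / 2 * Real.log γ ≤ t * s / 2 := by
    calc (d : ℝ) / 2 * Real.log γ ≤ (d : ℝ) / 2 * (t / s) :=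
          mul_le_mul_of_nonneg_left hlogγ (by positivity)
      _ = t * s / 2 := hdγ
  have hβγ : Real.pi / (β / 2) = 2 * Real.pi * γ := by
    rw [hβdef, hγdef]; field_simp
  have hγβ : Real.pi / (γ / 2) = 2 * Real.pi * β := by
    rw [hβdef, hγdef]; field_simp
  have hrpow2 : ∀ u : ℝ, 0 < u → (2 * Real.pi * u) ^ ((d : ℝ) / 2)
      = Real.exp ((Real.log (2 * Real.pi) + Real.log u) * ((d : ℝ) / 2)) := by
    intro u hu
    rw [Real.rpow_def_of_pos (by positivity), Real.log_mul (by positivity) hu.ne']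
  have hcexp : c = Real.exp (Real.log (2 * Real.pi) * (-(d : ℝ) / 2)) := by
    rw [hcdef, Real.rpow_def_of_pos (by positivity)]
  have hlogβ : Real.log β = -Real.log γ := by
    have e : β = γ⁻¹ := by rw [hβdef, hγdef]; field_simp
    rw [e, Real.log_inv]
  have hCu : (c * Real.exp (t * s / 2)) * (Real.pi / (β / 2)) ^ ((d : ℝ) / 2)
      ≤ Real.exp (t * s) := by
    rw [hβγ, hrpow2 γ hγpos, hcexp, ← Real.exp_add, ← Real.exp_add]
    apply Real.exp_le_exp.2
    rw [show Real.log (2 * Real.pi) * (-(d : ℝ) / 2) + t * s / 2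
        + (Real.log (2 * Real.pi) + Real.log γ) * ((d : ℝ) / 2)
        = t * s / 2 + (d : ℝ) / 2 * Real.log γ by ring]
    linarith [hdlog]
  have hCl : Real.exp (-t ^ 2 / 2 - t * s)
      ≤ (c * Real.exp (-t ^ 2 / 2 - t * s / 2)) * (Real.pi / (γ / 2)) ^ ((d : ℝ) / 2) := by
    rw [hγβ, hrpow2 β hβpos, hcexp, ← Real.exp_add, ← Real.exp_add, hlogβ]
    apply Real.exp_le_exp.2
    rw [show Real.log (2 * Real.pi) * (-(d : ℝ) / 2) + (-t ^ 2 / 2 - t * s / 2)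
        + (Real.log (2 * Real.pi) + -Real.log γ) * ((d : ℝ) / 2)
        = -t ^ 2 / 2 - t * s / 2 - (d : ℝ) / 2 * Real.log γ by ring]
    linarith [hdlog]
  -- assembling
  set Au : ENNReal := ∫⁻ x in V,
    ENNReal.ofReal ((c * Real.exp (t * s / 2)) * Real.exp (-(β / 2) * ‖x‖ ^ 2)) with hAudef
  set Al : ENNReal := ∫⁻ x in V,
    ENNReal.ofReal ((c * Real.exp (-t ^ 2 / 2 - t * s / 2)) * Real.exp (-(γ / 2) * ‖x‖ ^ 2))
    with hAldef
  have hAAu : A ≤ Au := lintegral_mono fun x => ENNReal.ofReal_le_ofReal (hup x)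
  have hAlA : Al ≤ A := lintegral_mono fun x => ENNReal.ofReal_le_ofReal (hlow x)
  have hPAu : P * Au = k * ENNReal.ofReal
      ((c * Real.exp (t * s / 2)) * (Real.pi / (β / 2)) ^ ((d : ℝ) / 2)) := by
    rw [hAudef, hkey (fun r => ENNReal.ofReal ((c * Real.exp (t * s / 2))
        * Real.exp (-(β / 2) * r ^ 2))) (by fun_prop),
      hIfull _ (β / 2) (by positivity) (by positivity)]
  have hPAl : P * Al = k * ENNReal.ofReal
      ((c * Real.exp (-t ^ 2 / 2 - t * s / 2)) * (Real.pi / (γ / 2)) ^ ((d : ℝ) / 2)) := by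
    rw [hAldef, hkey (fun r => ENNReal.ofReal ((c * Real.exp (-t ^ 2 / 2 - t * s / 2))
        * Real.exp (-(γ / 2) * r ^ 2))) (by fun_prop),
      hIfull _ (γ / 2) (by positivity) (by positivity)]
  have hup2 : P * A ≤ P * (L0 * ENNReal.ofReal (Real.exp (t * s))) := by
    calc P * A ≤ P * Au := mul_le_mul_right hAAu P
      _ = k * ENNReal.ofReal
          ((c * Real.exp (t * s / 2)) * (Real.pi / (β / 2)) ^ ((d : ℝ) / 2)) := hPAu
      _ ≤ k * ENNReal.ofReal (Real.exp (t * s)) :=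
          mul_le_mul_right (ENNReal.ofReal_le_ofReal hCu) k
      _ = (P * L0) * ENNReal.ofReal (Real.exp (t * s)) := by rw [hPL0]
      _ = P * (L0 * ENNReal.ofReal (Real.exp (t * s))) := by rw [mul_assoc]
  have hAle : A ≤ L0 * ENNReal.ofReal (Real.exp (t * s)) :=
    (ENNReal.mul_le_mul_iff_right hP0 hPtop).1 hup2
  have hL0top : L0 ≠ ⊤ := (hL0le.trans_lt ENNReal.one_lt_top).ne
  have hUbtop : L0 * ENNReal.ofReal (Real.exp (t * s)) ≠ ⊤ :=
    ENNReal.mul_ne_top hL0top ENNReal.ofReal_ne_top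
  have hAtop : A ≠ ⊤ := ne_top_of_le_ne_top hUbtop hAle
  constructor
  · have hlow2 : P * (L0 * ENNReal.ofReal (Real.exp (-t ^ 2 / 2 - t * s))) ≤ P * A := by
      calc P * (L0 * ENNReal.ofReal (Real.exp (-t ^ 2 / 2 - t * s)))
          = (P * L0) * ENNReal.ofReal (Real.exp (-t ^ 2 / 2 - t * s)) := by rw [mul_assoc]
        _ = k * ENNReal.ofReal (Real.exp (-t ^ 2 / 2 - t * s)) := by rw [hPL0]
        _ ≤ k * ENNReal.ofReal
            ((c * Real.exp (-t ^ 2 / 2 - t * s / 2)) * (Real.pi / (γ / 2)) ^ ((d : ℝ) / 2)) :=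
            mul_le_mul_right (ENNReal.ofReal_le_ofReal hCl) k
        _ = P * Al := hPAl.symm
        _ ≤ P * A := mul_le_mul_right hAlA P
    have hlegA : L0 * ENNReal.ofReal (Real.exp (-t ^ 2 / 2 - t * s)) ≤ A :=
      (ENNReal.mul_le_mul_iff_right hP0 hPtop).1 hlow2
    rw [hgV, hgVw]
    calc L0.toReal * Real.exp (-t ^ 2 / 2 - t * s)
        = (L0 * ENNReal.ofReal (Real.exp (-t ^ 2 / 2 - t * s))).toReal := by
          rw [ENNReal.toReal_mul, ENNReal.toReal_ofReal (Real.exp_nonneg _)]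
      _ ≤ A.toReal := ENNReal.toReal_mono hAtop hlegA
  · rw [hgV, hgVw]
    calc A.toReal ≤ (L0 * ENNReal.ofReal (Real.exp (t * s))).toReal :=
          ENNReal.toReal_mono hUbtop hAle
      _ = L0.toReal * Real.exp (t * s) := by
          rw [ENNReal.toReal_mul, ENNReal.toReal_ofReal (Real.exp_nonneg _)]
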